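/- arXiv:2011.14460 — 7 statements merged into one kernel-verified Lean document; each statement's English description precedes it below -/
import Mathlib

section
/- Let T be a sequence of length n over 𝔸, let I be a nonempty finite itemset, and let i, x be indices with 1 ≤ x ≤ i+1 ≤ n. Then I co-occurs in the window ω(i,x) if and only if max_{e∈I} tesla(T,e,i) < x (the maximum taken in ℕ∞). -/
/-- `tesla T e i` : the time elapsed since the last access of item `e` at index `i`,
i.e. `i - j` where `j` is the greatest index `j ≤ i` with `T j = e`, and `∞` if there
is no such index.  (Taking the infimum over all valid `j` of `i - j` picks out the
greatest such `j`; the infimum of the empty set in `ℕ∞` is `∞`.) -/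
noncomputable def tesla {𝔸 : Type*} {n : ℕ} (T : Fin n → 𝔸) (e : 𝔸) (i : ℕ) : ℕ∞ :=
  sInf {d : ℕ∞ | ∃ j : Fin n, (j : ℕ) ≤ i ∧ T j = e ∧ d = ((i - (j : ℕ) : ℕ) : ℕ∞)}

/-- `I` co-occurs in the window `ω(i,x) = {i-x+1, …, i}` of `T`. -/
def coOccursIn {𝔸 : Type*} {n : ℕ} (T : Fin n → 𝔸) (I : Finset 𝔸) (i x : ℕ) : Prop :=
  ∀ e ∈ I, ∃ j : Fin n, i + 1 - x ≤ (j : ℕ) ∧ (j : ℕ) ≤ i ∧ T j = e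

/-- Itemset `I` co-occurs in the window `ω(i,x)` iff `max_{e ∈ I} tesla(T,e,i) < x`. -/
theorem cooccurs_iff_sup_tesla_lt {𝔸 : Type*} {n : ℕ} (T : Fin n → 𝔸)
    (I : Finset 𝔸) (hI : I.Nonempty) (i x : ℕ)
    (hx : 1 ≤ x) (hxi : x ≤ i + 1) (hin : i + 1 ≤ n) :
    coOccursIn T I i x ↔ I.sup (fun e => tesla T e i) < (x : ℕ∞) := by
  have hbot : (⊥ : ℕ∞) < (x : ℕ∞) := by
    show (0 : ℕ∞) < (x : ℕ∞)
    exact_mod_cast (by omega : 0 < x)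
  rw [Finset.sup_lt_iff hbot]
  unfold coOccursIn tesla
  constructor
  · intro h e he
    obtain ⟨j, h1, h2, h3⟩ := h e he
    have hmem : ((i - (j : ℕ) : ℕ) : ℕ∞) ∈
        {d : ℕ∞ | ∃ j : Fin n, (j : ℕ) ≤ i ∧ T j = e ∧ d = ((i - (j : ℕ) : ℕ) : ℕ∞)} :=
      ⟨j, h2, h3, rfl⟩
    apply lt_of_le_of_lt (sInf_le hmem)
    exact_mod_cast (by omega : i - (j : ℕ) < x)
  · intro h e he
    obtain ⟨d, ⟨j, h1, h2, rfl⟩, hd⟩ := sInf_lt_iff.mp (h e he)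
    have : i - (j : ℕ) < x := by exact_mod_cast hd
    exact ⟨j, by omega, h1, h2⟩
end

section
/- Let T be a sequence of length n over 𝔸, let I be a nonempty finite itemset, and let 1 ≤ x ≤ n. Then co(T,I,x) equals the number of indices i ∈ {x−1,…,n−1} such that max_{e∈I} tesla(T,e,i) < x (the maximum taken in ℕ∞). -/
/-- `co(T,I,x)` : the number of indices `i ∈ {x-1, …, n-1}` such that `I` co-occurs
in the window `ω(i,x)`. -/
noncomputable def coCount {𝔸 : Type*} {n : ℕ} (T : Fin n → 𝔸) (I : Finset 𝔸) (x : ℕ) : ℕ :=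
  {i : ℕ | x - 1 ≤ i ∧ i ≤ n - 1 ∧ coOccursIn T I i x}.ncard

lemma tesla_lt_iff {𝔸 : Type*} {n : ℕ} (T : Fin n → 𝔸) (e : 𝔸) (i x : ℕ) :
    tesla T e i < (x : ℕ∞) ↔ ∃ j : Fin n, (j : ℕ) ≤ i ∧ T j = e ∧ i - (j : ℕ) < x := by
  rw [tesla, sInf_lt_iff]
  constructor
  · rintro ⟨d, ⟨j, hj, hTj, rfl⟩, hd⟩; exact ⟨j, hj, hTj, by exact_mod_cast hd⟩
  · rintro ⟨j, hj, hTj, hd⟩; exact ⟨_, ⟨j, hj, hTj, rfl⟩, by exact_mod_cast hd⟩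

/-- `co(T,I,x)` equals the number of indices `i ∈ {x-1, …, n-1}` with
`max_{e ∈ I} tesla(T,e,i) < x`. -/
theorem coCount_eq_card_sup_tesla_lt {𝔸 : Type*} {n : ℕ} (T : Fin n → 𝔸)
    (I : Finset 𝔸) (hI : I.Nonempty) (x : ℕ) (hx : 1 ≤ x) (hxn : x ≤ n) :
    coCount T I x =
      {i : ℕ | x - 1 ≤ i ∧ i ≤ n - 1 ∧ I.sup (fun e => tesla T e i) < (x : ℕ∞)}.ncard := by
  unfold coCount
  congr 1
  ext i
  simp only [Set.mem_setOf_eq]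
  refine and_congr_right fun h1 => and_congr_right fun h2 => ?_
  rw [Finset.sup_lt_iff (show (⊥ : ℕ∞) < (x : ℕ∞) by simpa using (show 0 < x from hx))]
  unfold coOccursIn
  refine forall_congr' fun e => forall_congr' fun he => ?_
  rw [tesla_lt_iff]
  constructor
  · rintro ⟨j, hj1, hj2, hj3⟩; exact ⟨j, hj2, hj3, by omega⟩
  · rintro ⟨j, hj1, hj2, hj3⟩; exact ⟨j, by omega, hj1, hj2⟩
end

section
/- Let T be a sequence of length n over 𝔸, let I be a nonempty finite itemset, and let 1 ≤ x ≤ n. Then co(T,I,x) = (n − x + 1) − |⋃_{e∈I} \overline{\{e\}}_x|, i.e., the co-occurrence count equals the total number n−x+1 of x-length windows minus the number of indices i ∈ {x−1,…,n−1} whose window ω(i,x) fails to contain at least one element of I. -/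
/-- `Ā_x` : the set of indices `i ∈ {x-1, …, n-1}` whose window `ω(i,x)` contains
no element of `A`. -/
def avoidSet {𝔸 : Type*} {n : ℕ} (T : Fin n → 𝔸) (A : Finset 𝔸) (x : ℕ) : Set ℕ :=
  {i : ℕ | x - 1 ≤ i ∧ i ≤ n - 1 ∧
    ∀ j : Fin n, i + 1 - x ≤ (j : ℕ) → (j : ℕ) ≤ i → T j ∉ A}

/-- `co(T,I,x) = (n - x + 1) - |⋃_{e ∈ I} {e}̄_x|`. -/
theorem coCount_eq_sub_card_union {𝔸 : Type*} {n : ℕ} (T : Fin n → 𝔸)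
    (I : Finset 𝔸) (hI : I.Nonempty) (x : ℕ) (hx : 1 ≤ x) (hxn : x ≤ n) :
    (coCount T I x : ℤ) =
      ((n : ℤ) - x + 1) - ((⋃ e ∈ I, avoidSet T {e} x).ncard : ℤ) := by
  classical
  unfold coCount
  set S : Set ℕ := {i : ℕ | x - 1 ≤ i ∧ i ≤ n - 1 ∧ coOccursIn T I i x} with hS
  set U : Set ℕ := ⋃ e ∈ I, avoidSet T {e} x with hU
  have hWfin : (Set.Icc (x-1) (n-1)).Finite := Set.finite_Icc _ _
  have hSsub : S ⊆ Set.Icc (x-1) (n-1) := fun i hi => ⟨hi.1, hi.2.1⟩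
  have hUsub : U ⊆ Set.Icc (x-1) (n-1) := by
    intro i hi
    simp only [hU, Set.mem_iUnion, avoidSet, Set.mem_setOf_eq] at hi
    obtain ⟨e, he, h1, h2, _⟩ := hi
    exact ⟨h1, h2⟩
  have hunion : S ∪ U = Set.Icc (x-1) (n-1) := by
    apply Set.Subset.antisymm (Set.union_subset hSsub hUsub)
    intro i hi
    by_cases h : coOccursIn T I i x
    · exact Or.inl ⟨hi.1, hi.2, h⟩
    · right
      simp only [coOccursIn] at h
      push_neg at h
      obtain ⟨e, he, hne⟩ := h
      simp only [hU, Set.mem_iUnion, avoidSet, Set.mem_setOf_eq]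
      refine ⟨e, he, hi.1, hi.2, ?_⟩
      intro j h1 h2 hmem
      simp only [Finset.mem_singleton] at hmem
      exact hne j h1 h2 hmem
  have hdisj : Disjoint S U := by
    rw [Set.disjoint_left]
    intro i hiS hiU
    simp only [hU, Set.mem_iUnion, avoidSet, Set.mem_setOf_eq] at hiU
    obtain ⟨e, he, _, _, havoid⟩ := hiU
    obtain ⟨j, h1, h2, h3⟩ := hiS.2.2 e he
    exact havoid j h1 h2 (by simp [h3])
  have hcard : S.ncard + U.ncard = n - x + 1 := by
    have h := Set.ncard_union_eq hdisj (hWfin.subset hSsub) (hWfin.subset hUsub)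
    rw [hunion] at h
    have hIcc : (Set.Icc (x-1) (n-1)).ncard = n - x + 1 := by
      rw [← Finset.coe_Icc, Set.ncard_coe_finset, Nat.card_Icc]
      omega
    omega
  omega
end

section
/- Let T be a sequence of length n over 𝔸, let I be a nonempty finite itemset, and let 1 ≤ x ≤ n. Then, by inclusion–exclusion, co(T,I,x) = (n − x + 1) − Σ_{∅ ≠ A ⊆ I} (−1)^{|A|+1} · |Ā_x|, the sum running over all nonempty subsets A of I. -/
open Finset

/-- Inclusion–exclusion:
`co(T,I,x) = (n - x + 1) - Σ_{∅ ≠ A ⊆ I} (-1)^(|A|+1) |Ā_x|`. -/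
theorem coCount_inclusion_exclusion {𝔸 : Type*} [DecidableEq 𝔸] {n : ℕ}
    (T : Fin n → 𝔸) (I : Finset 𝔸) (hI : I.Nonempty) (x : ℕ) (hx : 1 ≤ x) (hxn : x ≤ n) :
    (coCount T I x : ℤ) =
      ((n : ℤ) - x + 1) -
        ∑ A ∈ I.powerset.filter (fun A => A.Nonempty),
          (-1 : ℤ) ^ (A.card + 1) * ((avoidSet T A x).ncard : ℤ) := by
  classical
  set S : Finset ℕ := Finset.Icc (x-1) (n-1) with hS
  have hScard : (S.card : ℤ) = (n : ℤ) - x + 1 := by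
    have : S.card = (n-1) + 1 - (x-1) := by rw [hS, Nat.card_Icc]
    omega
  -- missing indicator
  set m : ℕ → 𝔸 → ℤ := fun i e =>
    if ∀ j : Fin n, i + 1 - x ≤ (j : ℕ) → (j : ℕ) ≤ i → T j ≠ e then 1 else 0 with hm
  -- avoidSet card as a filter card
  have havoid : ∀ A : Finset 𝔸,
      ((avoidSet T A x).ncard : ℤ) = ∑ i ∈ S, ∏ e ∈ A, m i e := by
    intro A
    have h1 : avoidSet T A x =
        ↑(S.filter (fun i => ∀ j : Fin n, i + 1 - x ≤ (j : ℕ) → (j : ℕ) ≤ i → T j ∉ A)) := by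
      ext i
      simp [avoidSet, hS, Finset.mem_Icc, and_assoc]
    rw [h1, Set.ncard_coe_finset, Finset.card_filter]
    push_cast
    refine Finset.sum_congr rfl (fun i _ => ?_)
    rw [Finset.prod_boole]
    congr 1
    simp only [eq_iff_iff]
    constructor
    · intro h e he j h1 h2 hTe; exact h j h1 h2 (hTe ▸ he)
    · intro h j h1 h2 hjA; exact h _ hjA j h1 h2 rfl
  -- coCount as a sum of products
  have hco : (coCount T I x : ℤ) = ∑ i ∈ S, ∏ e ∈ I, (1 - m i e) := by
    have h1 : {i : ℕ | x - 1 ≤ i ∧ i ≤ n - 1 ∧ coOccursIn T I i x} =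
        ↑(S.filter (fun i => coOccursIn T I i x)) := by
      ext i
      simp [hS, Finset.mem_Icc, and_assoc]
    rw [coCount, h1, Set.ncard_coe_finset, Finset.card_filter]
    push_cast
    refine Finset.sum_congr rfl (fun i _ => ?_)
    have : ∀ e, (1 - m i e) =
        if ∃ j : Fin n, i + 1 - x ≤ (j : ℕ) ∧ (j : ℕ) ≤ i ∧ T j = e then 1 else 0 := by
      intro e
      rw [hm]
      simp only
      split_ifs with h1 h2 h2
      · obtain ⟨j, hj1, hj2, hj3⟩ := h2; exact absurd hj3 (h1 j hj1 hj2)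
      · ring
      · ring
      · push_neg at h1
        obtain ⟨j, hj1, hj2, hj3⟩ := h1
        exact absurd ⟨j, hj1, hj2, hj3⟩ h2
    simp only [this]
    rw [Finset.prod_boole]
    congr 1
  rw [hco]
  -- expand the product
  have hexp : ∀ i ∈ S, ∏ e ∈ I, (1 - m i e) =
      ∑ A ∈ I.powerset, (-1 : ℤ) ^ A.card * ∏ e ∈ A, m i e := by
    intro i _
    have : ∀ e ∈ I, (1 - m i e) = (-m i e) + 1 := by intro e _; ring
    rw [Finset.prod_congr rfl this, Finset.prod_add]
    refine Finset.sum_congr rfl (fun A hA => ?_)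
    rw [Finset.prod_const_one, mul_one]
    calc ∏ e ∈ A, -m i e = ∏ e ∈ A, (-1 : ℤ) * m i e := by simp
      _ = (∏ _e ∈ A, (-1 : ℤ)) * ∏ e ∈ A, m i e := Finset.prod_mul_distrib
      _ = (-1 : ℤ) ^ A.card * ∏ e ∈ A, m i e := by rw [Finset.prod_const]
  rw [Finset.sum_congr rfl hexp, Finset.sum_comm]
  simp only [← Finset.mul_sum]
  have hsplit : I.powerset = insert ∅ (I.powerset.filter (fun A => A.Nonempty)) := by
    ext A
    simp only [Finset.mem_insert, Finset.mem_filter, Finset.mem_powerset]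
    constructor
    · intro h
      by_cases hA : A = ∅
      · exact Or.inl hA
      · exact Or.inr ⟨h, Finset.nonempty_iff_ne_empty.mpr hA⟩
    · rintro (rfl | ⟨h, _⟩)
      · exact Finset.empty_subset I
      · exact h
  conv_lhs => rw [hsplit, Finset.sum_insert (by simp)]
  have hempty : (-1 : ℤ) ^ (∅ : Finset 𝔸).card * ∑ i ∈ S, ∏ e ∈ (∅ : Finset 𝔸), m i e
      = (n : ℤ) - x + 1 := by
    simp [hScard]
  rw [hempty]
  have hterm : ∀ A ∈ I.powerset.filter (fun A => A.Nonempty),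
      (-1 : ℤ) ^ A.card * ∑ i ∈ S, ∏ e ∈ A, m i e
        = -((-1 : ℤ) ^ (A.card + 1) * ((avoidSet T A x).ncard : ℤ)) := by
    intro A hA
    rw [havoid A, pow_succ]
    ring
  rw [Finset.sum_congr rfl hterm, Finset.sum_neg_distrib, ← sub_eq_add_neg]
end

section
/- Let T be a sequence of length n over 𝔸, let A ⊆ 𝔸 be a nonempty finite set, and let 1 ≤ x ≤ n. Then the number of x-length windows of T containing no element of A satisfies |Ā_x| = Σ_{k=x}^{n} (k − x + 1) · N_A(k); equivalently, |Ā_x| equals the sum, over all maximal A-gaps g of length at least x, of (length(g) − x + 1). -/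
/-- The interval `{a, …, b} ⊆ {0, …, n-1}` is an `A`-gap of `T` :
none of its entries lies in `A`. -/
def IsGap {𝔸 : Type*} {n : ℕ} (T : Fin n → 𝔸) (A : Finset 𝔸) (a b : ℕ) : Prop :=
  a ≤ b ∧ b < n ∧ ∀ j : Fin n, a ≤ (j : ℕ) → (j : ℕ) ≤ b → T j ∉ A

/-- A maximal `A`-gap : an `A`-gap not properly contained in any other `A`-gap. -/
def IsMaxGap {𝔸 : Type*} {n : ℕ} (T : Fin n → 𝔸) (A : Finset 𝔸) (a b : ℕ) : Prop :=
  IsGap T A a b ∧ ∀ a' b', IsGap T A a' b' → a' ≤ a → b ≤ b' → a' = a ∧ b' = b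

/-- `N_A(k)` : the number of maximal `A`-gaps of length `k`. -/
noncomputable def gapCount {𝔸 : Type*} {n : ℕ} (T : Fin n → 𝔸) (A : Finset 𝔸) (k : ℕ) : ℕ :=
  {p : ℕ × ℕ | IsMaxGap T A p.1 p.2 ∧ p.2 - p.1 + 1 = k}.ncard

private lemma gap_sub {𝔸 : Type*} {n : ℕ} {T : Fin n → 𝔸} {A : Finset 𝔸} {a b a' b' : ℕ}
    (h : IsGap T A a b) (h1 : a ≤ a') (h2 : a' ≤ b') (h3 : b' ≤ b) : IsGap T A a' b' :=
  ⟨h2, lt_of_le_of_lt h3 h.2.1, fun j hj1 hj2 => h.2.2 j (le_trans h1 hj1) (le_trans hj2 h3)⟩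

private lemma exists_maxGap {𝔸 : Type*} {n : ℕ} {T : Fin n → 𝔸} {A : Finset 𝔸} {a b : ℕ}
    (h : IsGap T A a b) : ∃ a' b', IsMaxGap T A a' b' ∧ a' ≤ a ∧ b ≤ b' := by
  classical
  have hex : ∃ a', IsGap T A a' b := ⟨a, h⟩
  have ha0g : IsGap T A (Nat.find hex) b := Nat.find_spec hex
  set a0 := Nat.find hex with ha0
  have ha0min : ∀ a', IsGap T A a' b → a0 ≤ a' := fun a' h' => Nat.find_min' hex h'
  have hbn : b ≤ n - 1 := by have := h.2.1; omega
  set b0 := Nat.findGreatest (fun b' => IsGap T A a0 b') (n - 1) with hb0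
  have hb0g : IsGap T A a0 b0 := Nat.findGreatest_spec hbn ha0g
  have hb0max : ∀ b', b' ≤ n - 1 → IsGap T A a0 b' → b' ≤ b0 :=
    fun b' h1 h2 => Nat.le_findGreatest h1 h2
  have hbb0 : b ≤ b0 := Nat.le_findGreatest hbn ha0g
  refine ⟨a0, b0, ⟨hb0g, ?_⟩, ha0min a h, hbb0⟩
  intro a' b' hg ha' hb'
  have hg1 : IsGap T A a' b := gap_sub hg le_rfl (le_trans ha' ha0g.1) (le_trans hbb0 hb')
  have hea : a' = a0 := le_antisymm ha' (ha0min a' hg1)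
  subst hea
  have hbn' : b' ≤ n - 1 := by have := hg.2.1; omega
  exact ⟨rfl, le_antisymm (hb0max b' hbn' hg) hb'⟩

private lemma maxGap_unique {𝔸 : Type*} {n : ℕ} {T : Fin n → 𝔸} {A : Finset 𝔸}
    {a1 b1 a2 b2 i : ℕ}
    (h1 : IsMaxGap T A a1 b1) (h2 : IsMaxGap T A a2 b2)
    (hi1 : a1 ≤ i) (hi2 : i ≤ b1) (hi3 : a2 ≤ i) (hi4 : i ≤ b2) : a1 = a2 ∧ b1 = b2 := by
  have hu : IsGap T A (min a1 a2) (max b1 b2) := by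
    refine ⟨by omega, by have := h1.1.2.1; have := h2.1.2.1; omega, ?_⟩
    intro j hj1 hj2
    rcases le_or_gt (j : ℕ) b1 with hb | hb
    · rcases le_or_gt a1 (j : ℕ) with ha | ha
      · exact h1.1.2.2 j ha hb
      · exact h2.1.2.2 j (by omega) (by omega)
    · exact h2.1.2.2 j (by omega) (by omega)
  have e1 := h1.2 _ _ hu (min_le_left _ _) (le_max_left _ _)
  have e2 := h2.2 _ _ hu (min_le_right _ _) (le_max_right _ _)
  omega

/-- `|Ā_x| = Σ_{k=x}^{n} (k - x + 1) · N_A(k)`. -/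
theorem card_avoidSet_eq_sum_gaps {𝔸 : Type*} {n : ℕ} (T : Fin n → 𝔸)
    (A : Finset 𝔸) (hA : A.Nonempty) (x : ℕ) (hx : 1 ≤ x) (hxn : x ≤ n) :
    (avoidSet T A x).ncard = ∑ k ∈ Finset.Icc x n, (k - x + 1) * gapCount T A k := by
  classical
  have hn : 1 ≤ n := le_trans hx hxn
  set M : Finset (ℕ × ℕ) := (Finset.range n ×ˢ Finset.range n).filter
      (fun p => IsMaxGap T A p.1 p.2) with hM
  have hMmem : ∀ p : ℕ × ℕ, p ∈ M ↔ IsMaxGap T A p.1 p.2 := by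
    intro p
    simp only [hM, Finset.mem_filter, Finset.mem_product, Finset.mem_range]
    constructor
    · exact fun h => h.2
    · intro h
      exact ⟨⟨lt_of_le_of_lt h.1.1 h.1.2.1, h.1.2.1⟩, h⟩
  set Mx : Finset (ℕ × ℕ) := M.filter (fun p => x ≤ p.2 - p.1 + 1) with hMx
  have hdisj : ∀ p ∈ Mx, ∀ q ∈ Mx, p ≠ q →
      Disjoint (Finset.Icc (p.1 + x - 1) p.2) (Finset.Icc (q.1 + x - 1) q.2) := by
    intro p hp q hq hpq
    rw [Finset.disjoint_left]
    intro i hip hiq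
    rw [Finset.mem_Icc] at hip hiq
    have hpM := (hMmem p).1 (Finset.mem_filter.1 hp).1
    have hqM := (hMmem q).1 (Finset.mem_filter.1 hq).1
    have := maxGap_unique hpM hqM (by omega) hip.2 (by omega) hiq.2
    exact hpq (Prod.ext this.1 this.2)
  have havoid : avoidSet T A x = ↑(Mx.biUnion (fun p => Finset.Icc (p.1 + x - 1) p.2)) := by
    ext i
    rw [Finset.mem_coe, Finset.mem_biUnion]
    simp only [avoidSet, Set.mem_setOf_eq, Finset.mem_Icc]
    constructor
    · rintro ⟨h1, h2, h3⟩
      have hgap : IsGap T A (i + 1 - x) i := ⟨by omega, by omega, h3⟩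
      obtain ⟨a, b, hmax, ha, hb⟩ := exists_maxGap hgap
      refine ⟨(a, b), Finset.mem_filter.2 ⟨(hMmem (a, b)).2 hmax, by simp only; omega⟩,
        ⟨by simp only; omega, hb⟩⟩
    · rintro ⟨p, hp, hi1, hi2⟩
      have hpM := (hMmem p).1 (Finset.mem_filter.1 hp).1
      have hg := hpM.1
      have hg1 := hg.1
      have hg2 := hg.2.1
      exact ⟨by omega, by omega, fun j hj1 hj2 => hg.2.2 j (by omega) (by omega)⟩
  rw [havoid, Set.ncard_coe_finset, Finset.card_biUnion hdisj]
  have hcard : ∀ p ∈ Mx, (Finset.Icc (p.1 + x - 1) p.2).card = p.2 - p.1 + 1 - x + 1 := by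
    intro p hp
    rw [Nat.card_Icc]
    have hpM := (hMmem p).1 (Finset.mem_filter.1 hp).1
    have h1 := hpM.1.1
    have h2 := (Finset.mem_filter.1 hp).2
    beta_reduce at h2
    omega
  rw [Finset.sum_congr rfl hcard]
  have hmaps : ∀ p ∈ Mx, p.2 - p.1 + 1 ∈ Finset.Icc x n := by
    intro p hp
    have hpM := (hMmem p).1 (Finset.mem_filter.1 hp).1
    have h1 := hpM.1.1
    have h2 := hpM.1.2.1
    have h3 := (Finset.mem_filter.1 hp).2
    beta_reduce at h3
    rw [Finset.mem_Icc]
    omega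
  rw [← Finset.sum_fiberwise_of_maps_to hmaps (fun p => p.2 - p.1 + 1 - x + 1)]
  refine Finset.sum_congr rfl fun k hk => ?_
  rw [Finset.mem_Icc] at hk
  have hfil : Mx.filter (fun p => p.2 - p.1 + 1 = k) = M.filter (fun p => p.2 - p.1 + 1 = k) := by
    rw [hMx, Finset.filter_filter]
    apply Finset.filter_congr
    intro p hp
    exact ⟨fun h => h.2, fun h => ⟨by omega, h⟩⟩
  have hgc : gapCount T A k = (M.filter (fun p => p.2 - p.1 + 1 = k)).card := by
    rw [gapCount]
    have hset : {p : ℕ × ℕ | IsMaxGap T A p.1 p.2 ∧ p.2 - p.1 + 1 = k} =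
        ↑(M.filter (fun p => p.2 - p.1 + 1 = k)) := by
      ext p
      simp only [Set.mem_setOf_eq, Finset.coe_filter, hMmem]
    rw [hset, Set.ncard_coe_finset]
  rw [hfil, hgc]
  have hconst : ∀ p ∈ M.filter (fun p => p.2 - p.1 + 1 = k), p.2 - p.1 + 1 - x + 1 = k - x + 1 := by
    intro p hp
    have := (Finset.mem_filter.1 hp).2
    beta_reduce at this
    omega
  rw [Finset.sum_congr rfl hconst, Finset.sum_const, smul_eq_mul, Nat.mul_comm]
end

section
/- Let I be a nonempty finite set, let f : I → ℕ be injective, and let t ∈ I be such that f(t) is not the maximum of f over I. Then for every k ∈ ℕ, Σ_{A ⊆ I, t ∈ A, min_A f = k} (−1)^{|A|+1} = 0; that is, the signed count of subsets of I containing t whose minimum f-value equals k vanishes. (This is the 'no histogram update' case of Theorem 2 of the paper, where f(e) = tesla(e, i−1) and t is the item seen at index i.) -/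
/-- `min_A f` : the minimum of `f` over the (nonempty) finite set `A`. -/
noncomputable def minOn' {α : Type*} (f : α → ℕ) (A : Finset α) : ℕ :=
  sInf (f '' ↑A)

lemma minOn_insert {α : Type*} [DecidableEq α] (f : α → ℕ) (A : Finset α) (hA : A.Nonempty)
    (a : α) : minOn' f (insert a A) = min (f a) (minOn' f A) := by
  unfold minOn'
  rw [Finset.coe_insert, Set.image_insert_eq, csInf_insert (OrderBot.bddBelow _)
    (hA.to_set.image f)]

lemma minOn_le {α : Type*} (f : α → ℕ) (A : Finset α) (a : α) (ha : a ∈ A) :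
    minOn' f A ≤ f a :=
  csInf_le (OrderBot.bddBelow _) ⟨a, ha, rfl⟩

/-- If the item `t ∈ I` does not attain the maximum of `f` over `I`
(`f e` is the time elapsed since `e` was last seen), then for every `k` the
signed count of subsets `A ⊆ I` containing `t` with `min_A f = k` vanishes:
no histogram update takes place. -/
theorem signed_count_not_max {α : Type*} [DecidableEq α]
    (I : Finset α) (hI : I.Nonempty) (f : α → ℕ) (hf : Set.InjOn f ↑I)
    (t : α) (ht : t ∈ I) (hmax : f t ≠ I.sup f) (k : ℕ) :
    ∑ A ∈ I.powerset.filter (fun A => t ∈ A ∧ minOn' f A = k),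
      (-1 : ℤ) ^ (A.card + 1) = 0 := by
  obtain ⟨m, hmI, hm⟩ := Finset.exists_mem_eq_sup I hI f
  have hmt : m ≠ t := fun h => hmax (h ▸ hm.symm)
  have hftm : f t < f m := by
    rcases lt_or_eq_of_le (Finset.le_sup (f := f) ht) with h | h
    · exact hm ▸ h
    · exact absurd h hmax
  set g : Finset α → Finset α := fun (A : Finset α) => if m ∈ A then A.erase m else insert m A with hg
  -- key: for A with t ∈ A, minOn' f (g A) = minOn' f A
  have hmin : ∀ A : Finset α, t ∈ A → minOn' f (g A) = minOn' f A := by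
    intro A htA
    by_cases hmA : m ∈ A
    · have hne : (A.erase m).Nonempty := ⟨t, Finset.mem_erase.mpr ⟨fun h => hmt h.symm, htA⟩⟩
      have : minOn' f A = min (f m) (minOn' f (A.erase m)) := by
        conv_lhs => rw [← Finset.insert_erase hmA]
        exact minOn_insert f _ hne m
      have hle : minOn' f (A.erase m) ≤ f t :=
        minOn_le f _ t (Finset.mem_erase.mpr ⟨fun h => hmt h.symm, htA⟩)
      simp only [hg, if_pos hmA]
      rw [this, min_eq_right (le_trans hle hftm.le)]
    · have hne : A.Nonempty := ⟨t, htA⟩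
      have hle : minOn' f A ≤ f t := minOn_le f A t htA
      simp only [hg, if_neg hmA]
      rw [minOn_insert f A hne m, min_eq_right (le_trans hle hftm.le)]
  apply Finset.sum_involution (g := fun A _ => g A)
  · intro A hA
    simp only [Finset.mem_filter, Finset.mem_powerset] at hA
    have : (g A).card + 1 = A.card ∨ A.card + 1 = (g A).card := by
      by_cases hmA : m ∈ A
      · left
        simp only [hg, if_pos hmA, Finset.card_erase_of_mem hmA]
        exact Nat.succ_pred_eq_of_pos (Finset.card_pos.mpr ⟨m, hmA⟩)
      · right; simp [hg, if_neg hmA, Finset.card_insert_of_notMem hmA]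
    rcases this with h | h
    · rw [← h]; ring
    · rw [h]; ring
  · intro A hA _
    simp only [Finset.mem_filter, Finset.mem_powerset] at hA
    by_cases hmA : m ∈ A
    · simp only [hg, if_pos hmA]
      exact fun h => (Finset.notMem_erase m A) (h.symm ▸ hmA)
    · simp only [hg, if_neg hmA]
      exact fun h => hmA (h ▸ Finset.mem_insert_self m A)
  · intro A hA
    simp only [Finset.mem_filter, Finset.mem_powerset] at hA ⊢
    obtain ⟨hsub, htA, hk⟩ := hA
    refine ⟨?_, ?_, (hmin A htA).trans hk⟩
    · by_cases hmA : m ∈ A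
      · simp only [hg, if_pos hmA]; exact (Finset.erase_subset m A).trans hsub
      · simp only [hg, if_neg hmA]; exact Finset.insert_subset hmI hsub
    · by_cases hmA : m ∈ A
      · simp only [hg, if_pos hmA]; exact Finset.mem_erase.mpr ⟨fun h => hmt h.symm, htA⟩
      · simp only [hg, if_neg hmA]; exact Finset.mem_insert_of_mem htA
  · intro A hA
    by_cases hmA : m ∈ A
    · simp [hg, if_pos hmA, Finset.insert_erase hmA]
    · simp [hg, if_neg hmA, Finset.erase_insert hmA]
end

section
/- Let I be a finite set with |I| ≥ 2, let f : I → ℕ be injective, and let t ∈ I be such that f(t) = max_{e∈I} f(e). Then for every k ∈ ℕ, the signed count Σ_{A ⊆ I, t ∈ A, min_A f = k} (−1)^{|A|+1} equals 1 if k = f(t), equals −1 if k = max_{e ∈ I∖{t}} f(e), and equals 0 otherwise. (This is the update rule of Theorem 2 of the paper: when the item t observed at index i is the least recently seen item, the gap histogram is incremented at the tesla value of t and decremented at the tesla value of the second least recently seen item.) -/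
/-- `min_A f` : the minimum of `f` over the (nonempty) finite set `A`. -/
noncomputable def finsetMinOn {α : Type*} (f : α → ℕ) (A : Finset α) : ℕ :=
  sInf (f '' ↑A)

lemma minOn_eq_iff {α : Type*} {f : α → ℕ} {A : Finset α} (hA : A.Nonempty) {k : ℕ} :
    finsetMinOn f A = k ↔ (∃ e ∈ A, f e = k) ∧ ∀ x ∈ A, k ≤ f x := by
  constructor
  · rintro rfl
    have hne : (f '' ↑A).Nonempty := by
      obtain ⟨a, ha⟩ := hA
      exact ⟨f a, a, by simpa using ha, rfl⟩
    have hmem := Nat.sInf_mem hne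
    obtain ⟨e, he, hfe⟩ := hmem
    refine ⟨⟨e, by simpa using he, hfe⟩, fun x hx => ?_⟩
    exact Nat.sInf_le ⟨x, by simpa using hx, rfl⟩
  · rintro ⟨⟨e, he, hfe⟩, hub⟩
    refine le_antisymm (Nat.sInf_le ⟨e, by simpa using he, hfe⟩) ?_
    refine le_csInf ⟨f e, e, by simpa using he, rfl⟩ ?_
    rintro b ⟨x, hx, rfl⟩
    exact hub x (by simpa using hx)

lemma key_lemma {α : Type*} [DecidableEq α] (S : Finset α) (f : α → ℕ)
    (hf : Set.InjOn f ↑S) (k : ℕ) :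
    ∑ B ∈ S.powerset.filter (fun B => B.Nonempty ∧ finsetMinOn f B = k), (-1 : ℤ) ^ B.card =
      if (∃ e ∈ S, f e = k) ∧ (∀ x ∈ S, f x ≤ k) then -1 else 0 := by
  by_cases hk : ∃ e ∈ S, f e = k
  · obtain ⟨e, heS, hek⟩ := hk
    set T := S.filter (fun x => k < f x) with hT
    have heq : ∑ B ∈ S.powerset.filter (fun B => B.Nonempty ∧ finsetMinOn f B = k),
        (-1 : ℤ) ^ B.card = ∑ C ∈ T.powerset, (-1 : ℤ) ^ (C.card + 1) := by
      refine Finset.sum_nbij' (fun B => B.erase e) (fun C => insert e C) ?_ ?_ ?_ ?_ ?_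
      · intro B hB
        simp only [Finset.mem_filter, Finset.mem_powerset] at hB
        obtain ⟨hBS, hBne, hmin⟩ := hB
        rw [minOn_eq_iff hBne] at hmin
        simp only [Finset.mem_powerset, hT]
        intro x hx
        have hxB := Finset.mem_of_mem_erase hx
        have hxne := Finset.ne_of_mem_erase hx
        have hxS := hBS hxB
        refine Finset.mem_filter.mpr ⟨hxS, lt_of_le_of_ne (hmin.2 x hxB) ?_⟩
        intro hkx
        exact hxne (hf hxS heS (by omega))
      · intro C hC
        simp only [Finset.mem_powerset] at hC
        have heC : e ∉ C := by
          intro h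
          have := Finset.mem_filter.mp (hC h)
          omega
        have hsub : insert e C ⊆ S := by
          intro x hx
          rcases Finset.mem_insert.mp hx with rfl | hx
          · exact heS
          · exact (Finset.mem_filter.mp (hC hx)).1
        refine Finset.mem_filter.mpr ⟨Finset.mem_powerset.mpr hsub,
          ⟨e, Finset.mem_insert_self e C⟩, ?_⟩
        rw [minOn_eq_iff ⟨e, Finset.mem_insert_self e C⟩]
        refine ⟨⟨e, Finset.mem_insert_self e C, hek⟩, ?_⟩
        intro x hx
        rcases Finset.mem_insert.mp hx with rfl | hx
        · omega
        · exact le_of_lt (Finset.mem_filter.mp (hC hx)).2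
      · intro B hB
        simp only [Finset.mem_filter, Finset.mem_powerset] at hB
        obtain ⟨hBS, hBne, hmin⟩ := hB
        rw [minOn_eq_iff hBne] at hmin
        obtain ⟨e', he'B, he'k⟩ := hmin.1
        have : e' = e := hf (hBS he'B) heS (he'k.trans hek.symm)
        exact Finset.insert_erase (this ▸ he'B)
      · intro C hC
        simp only [Finset.mem_powerset] at hC
        have heC : e ∉ C := by
          intro h
          have := Finset.mem_filter.mp (hC h)
          omega
        exact Finset.erase_insert heC
      · intro B hB
        simp only [Finset.mem_filter, Finset.mem_powerset] at hB
        obtain ⟨hBS, hBne, hmin⟩ := hB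
        rw [minOn_eq_iff hBne] at hmin
        obtain ⟨e', he'B, he'k⟩ := hmin.1
        have heB : e ∈ B := by
          have : e' = e := hf (hBS he'B) heS (he'k.trans hek.symm)
          exact this ▸ he'B
        have := Finset.card_erase_add_one heB
        have h2 : B.card = (B.erase e).card + 1 := this.symm
        rw [h2]
    rw [heq]
    have hpow : ∀ C : Finset α, (-1 : ℤ) ^ (C.card + 1) = -(-1 : ℤ) ^ C.card := by
      intro C; ring
    simp_rw [hpow]
    rw [Finset.sum_neg_distrib, Finset.sum_powerset_neg_one_pow_card]
    have hcond : ((∃ e ∈ S, f e = k) ∧ ∀ x ∈ S, f x ≤ k) ↔ T = ∅ := by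
      constructor
      · rintro ⟨_, hub⟩
        rw [Finset.filter_eq_empty_iff]
        intro x hx
        exact not_lt.mpr (hub x hx)
      · intro hTe
        refine ⟨⟨e, heS, hek⟩, fun x hx => ?_⟩
        by_contra h
        have : x ∈ T := Finset.mem_filter.mpr ⟨hx, not_le.mp h⟩
        simp [hTe] at this
    by_cases hT0 : T = ∅
    · rw [if_pos hT0, if_pos (hcond.mpr hT0)]
    · rw [if_neg hT0, if_neg (fun h => hT0 (hcond.mp h))]; ring
  · rw [if_neg (fun h => hk h.1)]
    apply Finset.sum_eq_zero
    intro B hB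
    exfalso
    simp only [Finset.mem_filter, Finset.mem_powerset] at hB
    obtain ⟨hBS, hBne, hmin⟩ := hB
    rw [minOn_eq_iff hBne] at hmin
    obtain ⟨e', he'B, he'k⟩ := hmin.1
    exact hk ⟨e', hBS he'B, he'k⟩

/-- Update rule of the gap histogram (Theorem 2): if the item `t ∈ I` attains the
maximum of `f` over `I` (i.e. `t` is the least recently seen item), then the signed
count of subsets `A ⊆ I` containing `t` with `min_A f = k` is `+1` at `k = f t`,
`-1` at `k = max_{e ∈ I \ {t}} f e`, and `0` elsewhere. -/
theorem signed_count_max {α : Type*} [DecidableEq α]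
    (I : Finset α) (hcard : 2 ≤ I.card) (f : α → ℕ) (hf : Set.InjOn f ↑I)
    (t : α) (ht : t ∈ I) (hmax : f t = I.sup f) (k : ℕ) :
    ∑ A ∈ I.powerset.filter (fun A => t ∈ A ∧ finsetMinOn f A = k),
        (-1 : ℤ) ^ (A.card + 1) =
      if k = f t then 1 else if k = (I.erase t).sup f then -1 else 0 := by
  classical
  set I' := I.erase t with hI'
  have hI'ne : I'.Nonempty := by
    rw [← Finset.card_pos, hI', Finset.card_erase_of_mem ht]
    omega
  have hfle : ∀ x ∈ I, f x ≤ f t := fun x hx => hmax ▸ Finset.le_sup hx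
  -- Step 1: reindex by B = A.erase t
  have step1 : ∑ A ∈ I.powerset.filter (fun A => t ∈ A ∧ finsetMinOn f A = k),
      (-1 : ℤ) ^ (A.card + 1) =
      ∑ B ∈ I'.powerset.filter (fun B => finsetMinOn f (insert t B) = k), (-1 : ℤ) ^ B.card := by
    refine Finset.sum_nbij' (fun A => A.erase t) (fun B => insert t B) ?_ ?_ ?_ ?_ ?_
    · intro A hA
      simp only [Finset.mem_filter, Finset.mem_powerset] at hA ⊢
      obtain ⟨hAI, htA, hmin⟩ := hA
      refine ⟨fun x hx => Finset.mem_erase.mpr ⟨Finset.ne_of_mem_erase hx,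
        hAI (Finset.mem_of_mem_erase hx)⟩, ?_⟩
      rw [Finset.insert_erase htA]
      exact hmin
    · intro B hB
      simp only [Finset.mem_filter, Finset.mem_powerset] at hB ⊢
      obtain ⟨hBI', hmin⟩ := hB
      refine ⟨?_, Finset.mem_insert_self t B, hmin⟩
      intro x hx
      rcases Finset.mem_insert.mp hx with rfl | hx
      · exact ht
      · exact Finset.mem_of_mem_erase (hBI' hx)
    · intro A hA
      simp only [Finset.mem_filter, Finset.mem_powerset] at hA
      exact Finset.insert_erase hA.2.1
    · intro B hB
      simp only [Finset.mem_filter, Finset.mem_powerset] at hB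
      have : t ∉ B := fun h => (Finset.mem_erase.mp (hB.1 h)).1 rfl
      exact Finset.erase_insert this
    · intro A hA
      simp only [Finset.mem_filter, Finset.mem_powerset] at hA
      have h1 : A.card = (A.erase t).card + 1 := (Finset.card_erase_add_one hA.2.1).symm
      rw [h1]
      ring
  rw [step1]
  -- Step 2: rewrite the predicate
  have hpred : ∀ B ∈ I'.powerset, (finsetMinOn f (insert t B) = k ↔
      ((B = ∅ ∧ f t = k) ∨ (B.Nonempty ∧ finsetMinOn f B = k))) := by
    intro B hB
    simp only [Finset.mem_powerset] at hB
    rcases Finset.eq_empty_or_nonempty B with rfl | hBne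
    · have hmin : finsetMinOn f (insert t (∅ : Finset α)) = f t := by
        simp [finsetMinOn]
      rw [hmin]
      constructor
      · intro h; exact Or.inl ⟨rfl, h⟩
      · rintro (⟨_, h⟩ | ⟨h, _⟩)
        · exact h
        · simp at h
    · have hBI : ∀ x ∈ B, x ∈ I := fun x hx => Finset.mem_of_mem_erase (hB hx)
      have hmineq : finsetMinOn f (insert t B) = finsetMinOn f B := by
        have hBne' : (insert t B).Nonempty := ⟨t, Finset.mem_insert_self t B⟩
        obtain ⟨m, ⟨⟨e, heB, hem⟩, hub⟩⟩ : ∃ m, (∃ e ∈ B, f e = m) ∧ ∀ x ∈ B, m ≤ f x := by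
          refine ⟨finsetMinOn f B, ?_⟩
          exact (minOn_eq_iff hBne).mp rfl
        have h1 : finsetMinOn f B = m := (minOn_eq_iff hBne).mpr ⟨⟨e, heB, hem⟩, hub⟩
        have h2 : finsetMinOn f (insert t B) = m := by
          rw [minOn_eq_iff hBne']
          refine ⟨⟨e, Finset.mem_insert_of_mem heB, hem⟩, ?_⟩
          intro x hx
          rcases Finset.mem_insert.mp hx with rfl | hx
          · exact hem ▸ hfle e (hBI e heB)
          · exact hub x hx
        rw [h1, h2]
      rw [hmineq]
      constructor
      · intro h
        right
        exact ⟨hBne, h⟩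
      · rintro (⟨rfl, _⟩ | ⟨_, h⟩)
        · exact absurd hBne (by simp)
        · exact h
  rw [Finset.filter_congr hpred, Finset.filter_or]
  have hdisj : Disjoint (I'.powerset.filter (fun B => B = ∅ ∧ f t = k))
      (I'.powerset.filter (fun B => B.Nonempty ∧ finsetMinOn f B = k)) := by
    rw [Finset.disjoint_left]
    rintro B hB1 hB2
    simp only [Finset.mem_filter] at hB1 hB2
    obtain ⟨_, rfl, _⟩ := hB1
    exact absurd hB2.2.1 (by simp)
  rw [Finset.sum_union hdisj]
  have hfirst : ∑ B ∈ I'.powerset.filter (fun B => B = ∅ ∧ f t = k), (-1 : ℤ) ^ B.card =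
      if k = f t then 1 else 0 := by
    by_cases hkt : k = f t
    · rw [if_pos hkt]
      have : I'.powerset.filter (fun B => B = ∅ ∧ f t = k) = {∅} := by
        ext B
        simp only [Finset.mem_filter, Finset.mem_powerset, Finset.mem_singleton]
        constructor
        · rintro ⟨_, rfl, _⟩; rfl
        · rintro rfl; exact ⟨Finset.empty_subset _, rfl, hkt.symm⟩
      rw [this]
      simp
    · rw [if_neg hkt]
      apply Finset.sum_eq_zero
      intro B hB
      simp only [Finset.mem_filter] at hB
      exact absurd hB.2.2.symm hkt
  have hinj' : Set.InjOn f ↑I' := hf.mono (by simp [hI', Finset.erase_subset])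
  rw [hfirst, key_lemma I' f hinj' k]
  have hcond : ((∃ e ∈ I', f e = k) ∧ ∀ x ∈ I', f x ≤ k) ↔ k = I'.sup f := by
    constructor
    · rintro ⟨⟨e, heI', hek⟩, hub⟩
      refine le_antisymm (hek ▸ Finset.le_sup heI') (Finset.sup_le hub)
    · rintro rfl
      obtain ⟨e, heI', hek⟩ := Finset.exists_mem_eq_sup I' hI'ne f
      exact ⟨⟨e, heI', hek.symm⟩, fun x hx => Finset.le_sup hx⟩
  rw [if_congr hcond rfl rfl]
  -- Step 3: combine
  have hne_ts : f t ≠ I'.sup f := by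
    obtain ⟨e, heI', hek⟩ := Finset.exists_mem_eq_sup I' hI'ne f
    rw [hek]
    intro h
    have : t = e := hf ht (Finset.mem_of_mem_erase heI') h
    exact (Finset.mem_erase.mp heI').1 this.symm
  split_ifs with h1 h2 h3
  · exact absurd (h1.symm.trans h2) hne_ts
  · ring
  · ring
  · ring
end
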